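/- Let G be the graph obtained from K7 by deleting two adjacent edges, and let G' be obtained from G by a Δ-Y exchange on a triangle having exactly one vertex incident to a deleted edge, where that vertex is incident to exactly one deleted edge. Then G' does not contain K_{4,4} minus an edge as a minor. -/

import Mathlib

open SimpleGraph

/-- `H` is a minor of `G`: branch-set formulation. -/
def IsMinor {W V : Type*} (H : SimpleGraph W) (G : SimpleGraph V) : Prop :=
  ∃ ρ : W → Set V,
    (∀ w, (ρ w).Nonempty) ∧
    (∀ w, (G.induce (ρ w)).Connected) ∧
    (Pairwise fun w w' => Disjoint (ρ w) (ρ w')) ∧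
    ∀ ⦃w w'⦄, H.Adj w w' → ∃ a ∈ ρ w, ∃ b ∈ ρ w', G.Adj a b

/-- Δ-Y exchange on the triangle `v₁ v₂ v₃`. -/
def deltaY {V : Type*} (G : SimpleGraph V) (v₁ v₂ v₃ : V) : SimpleGraph (V ⊕ Unit) where
  Adj x y :=
    match x, y with
    | .inl a, .inl b => G.Adj a b ∧ s(a, b) ∉ ({s(v₁, v₂), s(v₂, v₃), s(v₁, v₃)} : Set (Sym2 V))
    | .inl a, .inr _ => a = v₁ ∨ a = v₂ ∨ a = v₃
    | .inr _, .inl a => a = v₁ ∨ a = v₂ ∨ a = v₃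
    | .inr _, .inr _ => False
  symm := ⟨by
    rintro (a | a) (b | b) h
    · exact ⟨h.1.symm, by rw [show s(b, a) = s(a, b) from Sym2.eq_swap]; exact h.2⟩
    · exact h
    · exact h
    · exact h⟩
  loopless := ⟨by
    rintro (a | a) h
    · exact G.ne_of_adj h.1 rfl
    · exact h⟩

/-- `K_{4,4}` minus an edge (the edge between `inl 0` and `inr 0`). -/
def K44e : SimpleGraph (Fin 4 ⊕ Fin 4) where
  Adj x y :=
    match x, y with
    | .inl i, .inr j => ¬(i = 0 ∧ j = 0)
    | .inr j, .inl i => ¬(i = 0 ∧ j = 0)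
    | _, _ => False
  symm := ⟨by rintro (i | i) (j | j) h <;> exact h⟩
  loopless := ⟨by rintro (i | i) h <;> exact h⟩

instance : DecidableRel K44e.Adj := fun u v =>
  match u, v with
  | .inl _, .inl _ => inferInstanceAs (Decidable False)
  | .inl i, .inr j => inferInstanceAs (Decidable ¬(i = 0 ∧ j = 0))
  | .inr j, .inl i => inferInstanceAs (Decidable ¬(i = 0 ∧ j = 0))
  | .inr _, .inr _ => inferInstanceAs (Decidable False)

lemma three_mem' {α : Type*} {p q r A B C X : α}
    (hpq : p ≠ q) (hpr : p ≠ r) (hqr : q ≠ r)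
    (hp : p = A ∨ p = B ∨ p = C) (hq : q = A ∨ q = B ∨ q = C)
    (hr : r = A ∨ r = B ∨ r = C)
    (hX : X = A ∨ X = B ∨ X = C) :
    X = p ∨ X = q ∨ X = r := by
  rcases hp with rfl|rfl|rfl <;> rcases hq with rfl|rfl|rfl <;>
    rcases hr with rfl|rfl|rfl <;> tauto

lemma four_not_three' {α : Type*} {p q r s A B C : α}
    (hpq : p ≠ q) (hpr : p ≠ r) (hps : p ≠ s) (hqr : q ≠ r) (hqs : q ≠ s) (hrs : r ≠ s)
    (hp : p = A ∨ p = B ∨ p = C) (hq : q = A ∨ q = B ∨ q = C)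
    (hr : r = A ∨ r = B ∨ r = C) (hs : s = A ∨ s = B ∨ s = C) : False := by
  rcases hp with rfl|rfl|rfl <;> rcases hq with rfl|rfl|rfl <;>
    rcases hr with rfl|rfl|rfl <;> rcases hs with rfl|rfl|rfl <;> tauto

lemma minor_embedding {W V : Type*} [Fintype W] [Fintype V]
    (hcard : Fintype.card W = Fintype.card V)
    {H : SimpleGraph W} {G : SimpleGraph V}
    (h : IsMinor H G) :
    ∃ f : W → V, Function.Bijective f ∧ ∀ ⦃w w'⦄, H.Adj w w' → G.Adj (f w) (f w') := by
  classical
  obtain ⟨ρ, hne, -, hdisj, hadj⟩ := h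
  choose f hf using hne
  have hinj : Function.Injective f := by
    intro u u' he
    by_contra hne'
    exact Set.disjoint_left.mp (hdisj hne') (hf u) (he ▸ hf u')
  have hbij : Function.Bijective f :=
    ⟨hinj, ((Fintype.bijective_iff_injective_and_card f).mpr ⟨hinj, hcard⟩).2⟩
  have hsingle : ∀ u v, v ∈ ρ u → v = f u := by
    intro u v hv
    obtain ⟨u', rfl⟩ := hbij.2 v
    by_contra hne'
    have hu : u' ≠ u := fun e => hne' (by rw [e])
    exact Set.disjoint_left.mp (hdisj hu) (hf u') hv
  refine ⟨f, hbij, ?_⟩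
  intro u u' huu'
  obtain ⟨p, hp, q, hq, hpq⟩ := hadj huu'
  obtain rfl := hsingle _ _ hp
  obtain rfl := hsingle _ _ hq
  exact hpq

lemma core' {G : SimpleGraph (Fin 7)} {a b c x w w' : Fin 7}
    {f : Fin 4 ⊕ Fin 4 → Fin 7 ⊕ Unit} (hinj : Function.Injective f)
    (hsurj : Function.Surjective f)
    (hHom : ∀ ⦃u v⦄, K44e.Adj u v → (deltaY G a b c).Adj (f u) (f v))
    {w0 n1 n2 n3 m0 m1 m2 m3 : Fin 4 ⊕ Fin 4}
    (hw0 : f w0 = .inr ())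
    (hnmem : ∀ v, K44e.Adj w0 v → f v = .inl a ∨ f v = .inl b ∨ f v = .inl c)
    (hcover : ∀ u, u = w0 ∨ u = n1 ∨ u = n2 ∨ u = n3 ∨ u = m0 ∨ u = m1 ∨ u = m2 ∨ u = m3)
    (hwn1 : K44e.Adj w0 n1) (hwn2 : K44e.Adj w0 n2) (hwn3 : K44e.Adj w0 n3)
    (hn12 : n1 ≠ n2) (hn13 : n1 ≠ n3) (hn23 : n2 ≠ n3)
    (hmn : ∀ m' ∈ [m1, m2, m3], ∀ n' ∈ [n1, n2, n3], K44e.Adj m' n')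
    (hmm0 : ∀ m' ∈ [m1, m2, m3], K44e.Adj m' m0)
    (hm0w : m0 ≠ w0) (hm1w : m1 ≠ w0) (hm2w : m2 ≠ w0) (hm3w : m3 ≠ w0)
    (hwabc : w = a ∨ w = b ∨ w = c)
    (hxabc : ¬(x = a ∨ x = b ∨ x = c))
    (hw'abc : ¬(w' = a ∨ w' = b ∨ w' = c))
    (hxw : ¬G.Adj x w) (hxw' : ¬G.Adj x w') (hw'x : w' ≠ x) : False := by
  have hfn1 := hnmem n1 hwn1
  have hfn2 := hnmem n2 hwn2
  have hfn3 := hnmem n3 hwn3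
  have hwmem : Sum.inl w = f n1 ∨ Sum.inl w = f n2 ∨ Sum.inl w = f n3 :=
    three_mem' (hinj.ne hn12) (hinj.ne hn13) (hinj.ne hn23) hfn1 hfn2 hfn3
      (by rcases hwabc with rfl|rfl|rfl <;> simp)
  have hml : ∀ u, u ≠ w0 → ∃ t, f u = Sum.inl t := by
    intro u hu
    rcases h : f u with t | t
    · exact ⟨t, rfl⟩
    · cases t; exact absurd (hinj (h.trans hw0.symm)) hu
  have hmw : ∀ m' ∈ [m1, m2, m3], ∃ t, f m' = Sum.inl t ∧ G.Adj t w := by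
    intro m' hm'
    have hm'w0 : m' ≠ w0 := by
      simp only [List.mem_cons, List.not_mem_nil, or_false] at hm'
      rcases hm' with rfl | rfl | rfl
      exacts [hm1w, hm2w, hm3w]
    obtain ⟨t, ht⟩ := hml m' hm'w0
    refine ⟨t, ht, ?_⟩
    rcases hwmem with hwe | hwe | hwe
    · have h2 := hHom (hmn m' hm' n1 (by simp))
      rw [ht, ← hwe] at h2
      exact h2.1
    · have h2 := hHom (hmn m' hm' n2 (by simp))
      rw [ht, ← hwe] at h2
      exact h2.1
    · have h2 := hHom (hmn m' hm' n3 (by simp))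
      rw [ht, ← hwe] at h2
      exact h2.1
  obtain ⟨ux, hux⟩ := hsurj (Sum.inl x)
  have hxne : ∀ m' ∈ [m1, m2, m3], ux ≠ m' := by
    intro m' hm' he
    obtain ⟨t, ht, htw⟩ := hmw m' hm'
    rw [he, ht] at hux
    obtain rfl : t = x := by injection hux
    exact hxw htw
  have hnx : ∀ n', f n' = .inl a ∨ f n' = .inl b ∨ f n' = .inl c → ux ≠ n' := by
    intro n' hn' he
    rw [he] at hux
    rcases hn' with h | h | h
    · rw [hux] at h; injection h with h'; exact hxabc (Or.inl h')
    · rw [hux] at h; injection h with h'; exact hxabc (Or.inr (Or.inl h'))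
    · rw [hux] at h; injection h with h'; exact hxabc (Or.inr (Or.inr h'))
  have hux0 : ux = m0 := by
    rcases hcover ux with rfl | rfl | rfl | rfl | rfl | rfl | rfl | rfl
    · rw [hw0] at hux; exact absurd hux (by simp)
    · exact absurd rfl (hnx _ hfn1)
    · exact absurd rfl (hnx _ hfn2)
    · exact absurd rfl (hnx _ hfn3)
    · rfl
    · exact absurd rfl (hxne _ (by simp))
    · exact absurd rfl (hxne _ (by simp))
    · exact absurd rfl (hxne _ (by simp))
  have hfm0 : f m0 = Sum.inl x := by rw [← hux0]; exact hux
  obtain ⟨uw, huw⟩ := hsurj (Sum.inl w')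
  have hnw' : ∀ n', f n' = .inl a ∨ f n' = .inl b ∨ f n' = .inl c → uw ≠ n' := by
    intro n' hn' he
    rw [he] at huw
    rcases hn' with h | h | h
    · rw [huw] at h; injection h with h'; exact hw'abc (Or.inl h')
    · rw [huw] at h; injection h with h'; exact hw'abc (Or.inr (Or.inl h'))
    · rw [huw] at h; injection h with h'; exact hw'abc (Or.inr (Or.inr h'))
  have hcontra : ∀ m' ∈ [m1, m2, m3], uw = m' → False := by
    intro m' hm' he
    have h2 := hHom (hmm0 m' hm')
    rw [← he, huw, hfm0] at h2
    exact hxw' h2.1.symm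
  rcases hcover uw with rfl | rfl | rfl | rfl | rfl | rfl | rfl | rfl
  · rw [hw0] at huw; exact absurd huw (by simp)
  · exact absurd rfl (hnw' _ hfn1)
  · exact absurd rfl (hnw' _ hfn2)
  · exact absurd rfl (hnw' _ hfn3)
  · rw [hfm0] at huw; exact hw'x (by injection huw with h; exact h.symm)
  · exact hcontra _ (by simp) rfl
  · exact hcontra _ (by simp) rfl
  · exact hcontra _ (by simp) rfl

/-- Let `G` be `K₇` minus two adjacent edges `s(x,y)`, `s(x,z)`, and
perform a Δ-Y exchange on a triangle `a b c` of `G` having exactly one vertex incident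
to a deleted edge, that vertex being incident to exactly one deleted edge (i.e. it is
`y` or `z`).  The result has no `K_{4,4} - e` minor. -/
theorem K7_minus_two_adjacent_deltaY_no_K44e_minor
    (x y z : Fin 7) (hxy : x ≠ y) (hxz : x ≠ z) (hyz : y ≠ z)
    (G : SimpleGraph (Fin 7))
    (hG : G = (⊤ : SimpleGraph (Fin 7)).deleteEdges {s(x, y), s(x, z)})
    (a b c : Fin 7)
    (hab : G.Adj a b) (hbc : G.Adj b c) (hac : G.Adj a c)
    (hone : ∃! w, w ∈ ({a, b, c} : Set (Fin 7)) ∧ w ∈ ({x, y, z} : Set (Fin 7)))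
    (hnotx : ∀ w, w ∈ ({a, b, c} : Set (Fin 7)) → w ∈ ({x, y, z} : Set (Fin 7)) →
      (w = y ∨ w = z)) :
    ¬ IsMinor K44e (deltaY G a b c) := by
  intro hmin
  obtain ⟨f, hbij, hHom⟩ := minor_embedding (by simp) hmin
  have hinj := hbij.1
  have hxy' : ¬ G.Adj x y := by rw [hG]; simp
  have hxz' : ¬ G.Adj x z := by rw [hG]; simp
  have hxabc : ¬(x = a ∨ x = b ∨ x = c) := by
    rintro (rfl | rfl | rfl) <;>
    · rcases hnotx x (by simp) (by simp) with h | h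
      exacts [hxy h, hxz h]
  obtain ⟨w, ⟨hwabc, hwxyz⟩, huniq⟩ := hone
  have hwabc' : w = a ∨ w = b ∨ w = c := by simpa using hwabc
  obtain ⟨w', hxw, hxw', hw'x, hw'abc⟩ :
      ∃ w', ¬G.Adj x w ∧ ¬G.Adj x w' ∧ w' ≠ x ∧ ¬(w' = a ∨ w' = b ∨ w' = c) := by
    rcases hnotx w hwabc hwxyz with h | h
    · refine ⟨z, ?_, hxz', fun e => hxz e.symm, fun e => ?_⟩
      · rw [h]; exact hxy'
      · exact hyz (((huniq z ⟨by simpa using e, by simp⟩).trans h).symm)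
    · refine ⟨y, ?_, hxy', fun e => hxy e.symm, fun e => ?_⟩
      · rw [h]; exact hxz'
      · exact hyz ((huniq y ⟨by simpa using e, by simp⟩).trans h)
  have hnmem : ∀ u v, f u = Sum.inr () → K44e.Adj u v →
      f v = Sum.inl a ∨ f v = Sum.inl b ∨ f v = Sum.inl c := by
    intro u v hu hadj
    have h := hHom hadj
    rw [hu] at h
    rcases hv : f v with t | t
    · rw [hv] at h
      have h' : t = a ∨ t = b ∨ t = c := h
      rcases h' with h'' | h'' | h''
      · exact Or.inl (congrArg Sum.inl h'')
      · exact Or.inr (Or.inl (congrArg Sum.inl h''))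
      · exact Or.inr (Or.inr (congrArg Sum.inl h''))
    · rw [hv] at h
      exact absurd h (fun hh => hh)
  obtain ⟨w0, hw0⟩ := hbij.2 (Sum.inr ())
  rcases w0 with i | i <;> fin_cases i
  · -- w0 = inl 0 : the Δ-Y vertex is a degree-3 vertex on the left side
    exact core' hinj hbij.2 hHom
      (n1 := Sum.inr 1) (n2 := Sum.inr 2) (n3 := Sum.inr 3)
      (m0 := Sum.inr 0) (m1 := Sum.inl 1) (m2 := Sum.inl 2) (m3 := Sum.inl 3)
      hw0 (fun v h => hnmem _ v hw0 h)
      (by decide) (by decide) (by decide) (by decide)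
      (by decide) (by decide) (by decide)
      (by intro m' hm' n' hn'; simp only [List.mem_cons, List.not_mem_nil, or_false] at hm' hn'; rcases hm' with rfl|rfl|rfl <;> rcases hn' with rfl|rfl|rfl <;> decide)
      (by intro m' hm'; simp only [List.mem_cons, List.not_mem_nil, or_false] at hm'; rcases hm' with rfl|rfl|rfl <;> decide)
      (by decide) (by decide) (by decide) (by decide)
      hwabc' hxabc hw'abc hxw hxw' hw'x
  · exact four_not_three' (p := f (Sum.inr 0)) (q := f (Sum.inr 1)) (r := f (Sum.inr 2))
      (s := f (Sum.inr 3))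
      (hinj.ne (by decide)) (hinj.ne (by decide)) (hinj.ne (by decide))
      (hinj.ne (by decide)) (hinj.ne (by decide)) (hinj.ne (by decide))
      (hnmem _ _ hw0 (by decide)) (hnmem _ _ hw0 (by decide))
      (hnmem _ _ hw0 (by decide)) (hnmem _ _ hw0 (by decide))
  · exact four_not_three' (p := f (Sum.inr 0)) (q := f (Sum.inr 1)) (r := f (Sum.inr 2))
      (s := f (Sum.inr 3))
      (hinj.ne (by decide)) (hinj.ne (by decide)) (hinj.ne (by decide))
      (hinj.ne (by decide)) (hinj.ne (by decide)) (hinj.ne (by decide))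
      (hnmem _ _ hw0 (by decide)) (hnmem _ _ hw0 (by decide))
      (hnmem _ _ hw0 (by decide)) (hnmem _ _ hw0 (by decide))
  · exact four_not_three' (p := f (Sum.inr 0)) (q := f (Sum.inr 1)) (r := f (Sum.inr 2))
      (s := f (Sum.inr 3))
      (hinj.ne (by decide)) (hinj.ne (by decide)) (hinj.ne (by decide))
      (hinj.ne (by decide)) (hinj.ne (by decide)) (hinj.ne (by decide))
      (hnmem _ _ hw0 (by decide)) (hnmem _ _ hw0 (by decide))
      (hnmem _ _ hw0 (by decide)) (hnmem _ _ hw0 (by decide))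
  · -- w0 = inr 0 : the Δ-Y vertex is the degree-3 vertex on the right side
    exact core' hinj hbij.2 hHom
      (n1 := Sum.inl 1) (n2 := Sum.inl 2) (n3 := Sum.inl 3)
      (m0 := Sum.inl 0) (m1 := Sum.inr 1) (m2 := Sum.inr 2) (m3 := Sum.inr 3)
      hw0 (fun v h => hnmem _ v hw0 h)
      (by decide) (by decide) (by decide) (by decide)
      (by decide) (by decide) (by decide)
      (by intro m' hm' n' hn'; simp only [List.mem_cons, List.not_mem_nil, or_false] at hm' hn'; rcases hm' with rfl|rfl|rfl <;> rcases hn' with rfl|rfl|rfl <;> decide)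
      (by intro m' hm'; simp only [List.mem_cons, List.not_mem_nil, or_false] at hm'; rcases hm' with rfl|rfl|rfl <;> decide)
      (by decide) (by decide) (by decide) (by decide)
      hwabc' hxabc hw'abc hxw hxw' hw'x
  · exact four_not_three' (p := f (Sum.inl 0)) (q := f (Sum.inl 1)) (r := f (Sum.inl 2))
      (s := f (Sum.inl 3))
      (hinj.ne (by decide)) (hinj.ne (by decide)) (hinj.ne (by decide))
      (hinj.ne (by decide)) (hinj.ne (by decide)) (hinj.ne (by decide))
      (hnmem _ _ hw0 (by decide)) (hnmem _ _ hw0 (by decide))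
      (hnmem _ _ hw0 (by decide)) (hnmem _ _ hw0 (by decide))
  · exact four_not_three' (p := f (Sum.inl 0)) (q := f (Sum.inl 1)) (r := f (Sum.inl 2))
      (s := f (Sum.inl 3))
      (hinj.ne (by decide)) (hinj.ne (by decide)) (hinj.ne (by decide))
      (hinj.ne (by decide)) (hinj.ne (by decide)) (hinj.ne (by decide))
      (hnmem _ _ hw0 (by decide)) (hnmem _ _ hw0 (by decide))
      (hnmem _ _ hw0 (by decide)) (hnmem _ _ hw0 (by decide))
  · exact four_not_three' (p := f (Sum.inl 0)) (q := f (Sum.inl 1)) (r := f (Sum.inl 2))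
      (s := f (Sum.inl 3))
      (hinj.ne (by decide)) (hinj.ne (by decide)) (hinj.ne (by decide))
      (hinj.ne (by decide)) (hinj.ne (by decide)) (hinj.ne (by decide))
      (hnmem _ _ hw0 (by decide)) (hnmem _ _ hw0 (by decide))
      (hnmem _ _ hw0 (by decide)) (hnmem _ _ hw0 (by decide))
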